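/- In the Witt graph W on the 77 blocks of the 3-(22,6,1) design (blocks adjacent iff disjoint), the maximum size of an independent set is 21, and every independent set of size 21 consists of the 21 blocks through some fixed point of the design. -/

import Mathlib

/-- `D` is (the block set of) a 3-(22,6,1) design on `Fin 22`: every block has
six points and every 3-subset of points lies in exactly one block. -/
def IsWittDesign (D : Finset (Finset (Fin 22))) : Prop :=
  (∀ β ∈ D, β.card = 6) ∧
  (∀ t : Finset (Fin 22), t.card = 3 → (D.filter fun β => t ⊆ β).card = 1)

section WittAux
open Finset

private lemma witt_dc1 {ι α : Type*} (s : Finset ι) (A : Finset α) (P : ι → α → Prop)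
    [∀ i a, Decidable (P i a)] :
    ∑ i ∈ s, (A.filter fun a => P i a).card = ∑ a ∈ A, (s.filter fun i => P i a).card := by
  simp only [Finset.card_filter]
  exact Finset.sum_comm

private lemma witt_dc2 {ι α β : Type*} (s : Finset ι) (A : Finset α) (B : Finset β)
    (P : ι → α → Prop) (Q : ι → β → Prop) [∀ i a, Decidable (P i a)] [∀ i b, Decidable (Q i b)] :
    ∑ i ∈ s, (A.filter fun a => P i a).card * (B.filter fun b => Q i b).card
      = ∑ a ∈ A, ∑ b ∈ B, (s.filter fun i => P i a ∧ Q i b).card := by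
  simp only [Finset.card_filter, Finset.sum_mul_sum]
  have : ∀ i ∈ s, ∑ a ∈ A, ∑ b ∈ B, (if P i a then 1 else 0) * (if Q i b then 1 else 0)
      = ∑ a ∈ A, ∑ b ∈ B, (if P i a ∧ Q i b then 1 else 0) := by
    intro i _
    refine Finset.sum_congr rfl fun a _ => Finset.sum_congr rfl fun b _ => ?_
    split_ifs with h1 h2 h3 <;> simp_all
  rw [Finset.sum_congr rfl this, Finset.sum_comm]
  refine Finset.sum_congr rfl fun a _ => Finset.sum_comm

private lemma witt_triple_count {D : Finset (Finset (Fin 22))} (hD : IsWittDesign D)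
    (x y z : Fin 22) (hxy : x ≠ y) (hxz : x ≠ z) (hyz : y ≠ z) :
    (D.filter fun β => x ∈ β ∧ y ∈ β ∧ z ∈ β).card = 1 := by
  have h := hD.2 {x, y, z} (by
    rw [Finset.card_insert_of_notMem (by simp [hxy, hxz]),
      Finset.card_insert_of_notMem (by simp [hyz]), Finset.card_singleton])
  rw [← h]
  apply congrArg
  apply Finset.filter_congr
  intro β _
  simp [Finset.insert_subset_iff]

private lemma witt_pair_count {D : Finset (Finset (Fin 22))} (hD : IsWittDesign D)
    (x y : Fin 22) (hxy : x ≠ y) :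
    (D.filter fun β => x ∈ β ∧ y ∈ β).card = 5 := by
  set s := D.filter fun β => x ∈ β ∧ y ∈ β with hs
  set T := (univ.erase x).erase y with hT
  have hTcard : T.card = 20 := by
    rw [hT, Finset.card_erase_of_mem (by simp [hxy.symm]), Finset.card_erase_of_mem (by simp)]
    rfl
  have key := witt_dc1 s T (fun β t => t ∈ β)
  have hL : ∑ β ∈ s, (T.filter fun t => t ∈ β).card = 4 * s.card := by
    rw [Finset.sum_congr rfl (g := fun _ => 4) ?_, Finset.sum_const, smul_eq_mul, mul_comm]
    intro β hβ
    rw [hs, Finset.mem_filter] at hβ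
    have hb6 : β.card = 6 := hD.1 β hβ.1
    have he : T.filter (fun t => t ∈ β) = (β.erase x).erase y := by
      rw [hT, Finset.filter_erase, Finset.filter_erase, Finset.filter_mem_eq_inter,
        Finset.univ_inter]
    rw [he, Finset.card_erase_of_mem (Finset.mem_erase.2 ⟨hxy.symm, hβ.2.2⟩),
      Finset.card_erase_of_mem hβ.2.1, hb6]
  have hR : ∑ t ∈ T, (s.filter fun β => t ∈ β).card = 20 := by
    rw [Finset.sum_congr rfl (g := fun _ => 1) ?_, Finset.sum_const, smul_eq_mul, mul_one, hTcard]
    intro t ht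
    rw [hT, Finset.mem_erase, Finset.mem_erase] at ht
    have : s.filter (fun β => t ∈ β) = D.filter fun β => x ∈ β ∧ y ∈ β ∧ t ∈ β := by
      rw [hs, Finset.filter_filter]
      apply Finset.filter_congr; intro β _; tauto
    rw [this]
    exact witt_triple_count hD x y t hxy (Ne.symm ht.2.1) (Ne.symm ht.1)
  omega

/-- r = 21 -/
private lemma witt_point_count {D : Finset (Finset (Fin 22))} (hD : IsWittDesign D) (x : Fin 22) :
    (D.filter fun β => x ∈ β).card = 21 := by
  set s := D.filter fun β => x ∈ β with hs
  set T := univ.erase x with hT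
  have hTcard : T.card = 21 := by rw [hT, Finset.card_erase_of_mem (by simp)]; rfl
  have key := witt_dc1 s T (fun β t => t ∈ β)
  have hL : ∑ β ∈ s, (T.filter fun t => t ∈ β).card = 5 * s.card := by
    rw [Finset.sum_congr rfl (g := fun _ => 5) ?_, Finset.sum_const, smul_eq_mul, mul_comm]
    intro β hβ
    rw [hs, Finset.mem_filter] at hβ
    have he : T.filter (fun t => t ∈ β) = β.erase x := by
      rw [hT, Finset.filter_erase, Finset.filter_mem_eq_inter, Finset.univ_inter]
    rw [he, Finset.card_erase_of_mem hβ.2, hD.1 β hβ.1]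
  have hR : ∑ t ∈ T, (s.filter fun β => t ∈ β).card = 105 := by
    rw [Finset.sum_congr rfl (g := fun _ => 5) ?_, Finset.sum_const, smul_eq_mul, hTcard]
    intro t ht
    rw [hT, Finset.mem_erase] at ht
    have : s.filter (fun β => t ∈ β) = D.filter fun β => x ∈ β ∧ t ∈ β := by
      rw [hs, Finset.filter_filter]
    rw [this]
    exact witt_pair_count hD x t (Ne.symm ht.1)
  omega

/-- two distinct blocks meet in at most 2 points -/
private lemma witt_inter_le_two {D : Finset (Finset (Fin 22))} (hD : IsWittDesign D)
    {B C : Finset (Fin 22)} (hB : B ∈ D) (hC : C ∈ D) (hne : B ≠ C) :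
    (B ∩ C).card ≤ 2 := by
  by_contra hcon
  obtain ⟨t, hts, ht3⟩ := Finset.exists_subset_card_eq (s := B ∩ C) (n := 3) (by omega)
  have h1 := hD.2 t ht3
  have h2 : ({B, C} : Finset (Finset (Fin 22))) ⊆ D.filter fun β => t ⊆ β := by
    intro β hβ
    rw [Finset.mem_insert, Finset.mem_singleton] at hβ
    rcases hβ with rfl | rfl <;> rw [Finset.mem_filter] <;>
      exact ⟨by assumption, hts.trans (by simp [Finset.inter_subset_left, Finset.inter_subset_right])⟩
  have := Finset.card_le_card h2
  rw [Finset.card_pair hne, h1] at this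
  omega

/-- two distinct non-disjoint blocks meet in exactly 2 points -/
private lemma witt_inter_eq_two {D : Finset (Finset (Fin 22))} (hD : IsWittDesign D)
    {B C : Finset (Fin 22)} (hB : B ∈ D) (hC : C ∈ D) (hne : B ≠ C)
    (hnd : ¬ Disjoint B C) : (B ∩ C).card = 2 := by
  obtain ⟨x, hxB, hxC⟩ := Finset.not_disjoint_iff.1 hnd
  have hx : x ∈ B ∩ C := Finset.mem_inter.2 ⟨hxB, hxC⟩
  have hle := witt_inter_le_two hD hB hC hne
  by_contra hcon
  have h1 : (B ∩ C).card = 1 := by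
    have := Finset.card_pos.2 ⟨x, hx⟩
    omega
  obtain ⟨a, ha⟩ := Finset.card_eq_one.1 h1
  have hax : a = x := by
    have := hx; rw [ha, Finset.mem_singleton] at this; exact this.symm
  subst hax
  -- pick c ∈ C, c ≠ a
  have hC6 : C.card = 6 := hD.1 C hC
  obtain ⟨c, hcC, hca⟩ := Finset.exists_mem_ne (s := C) (by omega) a
  have hcB : c ∉ B := by
    intro hcB
    have : c ∈ B ∩ C := Finset.mem_inter.2 ⟨hcB, hcC⟩
    rw [ha, Finset.mem_singleton] at this
    exact hca this
  have haC : a ∈ C := hxC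
  have haB : a ∈ B := hxB
  set s := D.filter fun β => a ∈ β ∧ c ∈ β with hs
  have hscard : s.card = 5 := witt_pair_count hD a c (Ne.symm hca)
  set T := B.erase a with hT
  have key := witt_dc1 s T (fun β t => t ∈ β)
  have hR : ∑ t ∈ T, (s.filter fun β => t ∈ β).card = 5 := by
    rw [Finset.sum_congr rfl (g := fun _ => 1) ?_, Finset.sum_const, smul_eq_mul, mul_one,
      hT, Finset.card_erase_of_mem haB, hD.1 B hB]
    intro t ht
    rw [hT, Finset.mem_erase] at ht
    have htc : t ≠ c := fun h => hcB (h ▸ ht.2)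
    have : s.filter (fun β => t ∈ β) = D.filter fun β => a ∈ β ∧ c ∈ β ∧ t ∈ β := by
      rw [hs, Finset.filter_filter]
      apply Finset.filter_congr; intro β _; tauto
    rw [this]
    exact witt_triple_count hD a c t (Ne.symm hca) (Ne.symm ht.1) (Ne.symm htc)
  have hub : ∀ β ∈ s, (T.filter fun t => t ∈ β).card ≤ 1 := by
    intro β hβ
    rw [hs, Finset.mem_filter] at hβ
    have hβB : β ≠ B := fun h => hcB (h ▸ hβ.2.2)
    have hint : (β ∩ B).card ≤ 2 := witt_inter_le_two hD hβ.1 hB hβB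
    have he : T.filter (fun t => t ∈ β) = (B ∩ β).erase a := by
      rw [hT, Finset.filter_erase]
      apply congrArg
      ext u
      simp [and_comm]
    rw [he, Finset.inter_comm]
    have : a ∈ β ∩ B := Finset.mem_inter.2 ⟨hβ.2.1, haB⟩
    rw [Finset.card_erase_of_mem this]
    omega
  -- C is in s, and its term is 0
  have hCs : C ∈ s := by rw [hs, Finset.mem_filter]; exact ⟨hC, haC, hcC⟩
  have hC0 : (T.filter fun t => t ∈ C).card = 0 := by
    have he : T.filter (fun t => t ∈ C) = (B ∩ C).erase a := by
      rw [hT, Finset.filter_erase]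
      apply congrArg
      ext u
      simp [and_comm]
    rw [he, ha]
    simp
  have hlt : ∑ β ∈ s, (T.filter fun t => t ∈ β).card < ∑ β ∈ s, 1 :=
    Finset.sum_lt_sum hub ⟨C, hCs, by omega⟩
  rw [Finset.sum_const, smul_eq_mul, mul_one, hscard] at hlt
  omega

/-- Core impossibility: no intersecting family of 21 or 22 blocks without a common point. -/
private lemma witt_core {D S : Finset (Finset (Fin 22))} (hD : IsWittDesign D) (hS : S ⊆ D)
    (hint : ∀ β ∈ S, ∀ γ ∈ S, β ≠ γ → ¬ Disjoint β γ)
    (hcard : S.card = 21 ∨ S.card = 22)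
    (hnp : ∀ p : Fin 22, ∃ B ∈ S, p ∉ B) : False := by
  classical
  have hcard2 : ∀ B ∈ S, ∀ C ∈ S, B ≠ C → (B ∩ C).card = 2 := fun B hB C hC hne =>
    witt_inter_eq_two hD (hS hB) (hS hC) hne (hint B hB C hC hne)
  -- maximal point
  obtain ⟨x, -, hmax⟩ := Finset.exists_max_image (univ : Finset (Fin 22))
    (fun p => (S.filter fun B => p ∈ B).card) ⟨0, Finset.mem_univ 0⟩
  set Sx := S.filter (fun B => x ∈ B) with hSx
  set Sx' := S.filter (fun B => ¬ x ∈ B) with hSx'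
  set n := Sx.card with hn
  set h := Sx'.card with hh
  have hnh : n + h = S.card := Finset.card_filter_add_card_filter_not _
  have hSxS : Sx ⊆ S := Finset.filter_subset _ _
  have hSx'S : Sx' ⊆ S := Finset.filter_subset _ _
  set Y := (univ : Finset (Fin 22)).erase x with hY
  have hYcard : Y.card = 21 := by rw [hY, Finset.card_erase_of_mem (by simp)]; rfl
  have hYf1 : ∀ B : Finset (Fin 22), Y.filter (fun y => y ∈ B) = B.erase x := by
    intro B
    rw [hY, Finset.filter_erase, Finset.filter_mem_eq_inter, Finset.univ_inter]
  have hYf2 : ∀ B C : Finset (Fin 22), Y.filter (fun y => y ∈ B ∧ y ∈ C) = (B ∩ C).erase x := by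
    intro B C
    rw [hY]
    ext u
    simp only [Finset.mem_filter, Finset.mem_erase, Finset.mem_inter, Finset.mem_univ,
      true_and, and_true]
  -- n ≤ 15
  obtain ⟨E, hES, hxE⟩ := hnp x
  have hn15 : n ≤ 15 := by
    have hmem : ∀ B ∈ Sx, B ∩ E ∈ E.powersetCard 2 := by
      intro B hB
      rw [Finset.mem_filter] at hB
      have hne : B ≠ E := fun hbe => hxE (hbe ▸ hB.2)
      exact Finset.mem_powersetCard.2 ⟨Finset.inter_subset_right,
        hcard2 B hB.1 E hES hne⟩
    have hinj : Set.InjOn (fun B => B ∩ E) ↑Sx := by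
      intro B1 hB1 B2 hB2 heq
      by_contra hne
      have heq' : B1 ∩ E = B2 ∩ E := heq
      rw [Finset.mem_coe, Finset.mem_filter] at hB1 hB2
      have h12 : (B1 ∩ B2).card = 2 := hcard2 B1 hB1.1 B2 hB2.1 hne
      have hneE : B1 ≠ E := fun hbe => hxE (hbe ▸ hB1.2)
      have h2 : (B1 ∩ E).card = 2 := hcard2 B1 hB1.1 E hES hneE
      have hsub : insert x (B1 ∩ E) ⊆ B1 ∩ B2 := by
        intro u hu
        rw [Finset.mem_insert] at hu
        rcases hu with rfl | hu
        · exact Finset.mem_inter.2 ⟨hB1.2, hB2.2⟩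
        · have hu2 : u ∈ B2 ∩ E := heq' ▸ hu
          exact Finset.mem_inter.2 ⟨(Finset.mem_inter.1 hu).1, (Finset.mem_inter.1 hu2).1⟩
      have hxnot : x ∉ B1 ∩ E := fun hu => hxE (Finset.mem_inter.1 hu).2
      have h3 : (insert x (B1 ∩ E)).card = 3 := by
        rw [Finset.card_insert_of_notMem hxnot, h2]
      have := Finset.card_le_card hsub
      omega
    calc n ≤ (E.powersetCard 2).card := Finset.card_le_card_of_injOn _ hmem hinj
      _ = 15 := by rw [Finset.card_powersetCard, hD.1 E (hS hES)]; decide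
  have hS21 : 21 ≤ S.card := by rcases hcard with hc | hc <;> omega
  have hh2 : 2 ≤ h := by omega
  -- n ≤ 11
  have hn11 : n ≤ 11 := by
    obtain ⟨C1, hC1, C2, hC2, hC12⟩ := Finset.one_lt_card.1 (by omega : 1 < Sx'.card)
    rw [hSx', Finset.mem_filter] at hC1 hC2
    set Dx := D.filter (fun β => x ∈ β) with hDx
    have key := witt_dc2 Dx C1 C2 (fun E c => c ∈ E) (fun E d => d ∈ E)
    have hRHS : ∀ c ∈ C1, ∑ d ∈ C2, (Dx.filter fun E => c ∈ E ∧ d ∈ E).card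
        = 6 + (if c ∈ C2 then 4 else 0) := by
      intro c hc
      have hxc : x ≠ c := fun hxeq => hC1.2 (hxeq ▸ hc)
      have hterm : ∀ d ∈ C2, (Dx.filter fun E => c ∈ E ∧ d ∈ E).card
          = 1 + (if d = c then 4 else 0) := by
        intro d hd
        have hxd : x ≠ d := fun hxeq => hC2.2 (hxeq ▸ hd)
        have hfe : Dx.filter (fun E => c ∈ E ∧ d ∈ E)
            = D.filter (fun E => x ∈ E ∧ c ∈ E ∧ d ∈ E) := by
          rw [hDx, Finset.filter_filter]
        by_cases hdc : d = c
        · subst hdc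
          simp only [if_pos rfl]
          rw [hfe]
          have he : D.filter (fun E => x ∈ E ∧ d ∈ E ∧ d ∈ E)
              = D.filter (fun E => x ∈ E ∧ d ∈ E) := by
            apply Finset.filter_congr; intro β _; tauto
          rw [he, witt_pair_count hD x d hxd]
          norm_num
        · simp only [if_neg hdc]
          rw [hfe, witt_triple_count hD x c d hxc hxd (fun e => hdc e.symm)]
      rw [Finset.sum_congr rfl hterm, Finset.sum_add_distrib, Finset.sum_const, smul_eq_mul,
        mul_one, hD.1 C2 (hS hC2.1), Finset.sum_ite_eq' C2 c (fun _ => 4)]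
    have h12 : (C1 ∩ C2).card = 2 := hcard2 C1 hC1.1 C2 hC2.1 hC12
    have hR : ∑ c ∈ C1, ∑ d ∈ C2, (Dx.filter fun E => c ∈ E ∧ d ∈ E).card = 44 := by
      rw [Finset.sum_congr rfl hRHS, Finset.sum_add_distrib, Finset.sum_const, smul_eq_mul,
        hD.1 C1 (hS hC1.1), Finset.sum_ite_mem, Finset.sum_const, h12]
      norm_num
    have hSxDx : Sx ⊆ Dx := by
      rw [hSx, hDx]; exact Finset.filter_subset_filter _ hS
    have hlow : ∀ E ∈ Sx, (C1.filter fun c => c ∈ E).card * (C2.filter fun d => d ∈ E).card = 4 := by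
      intro E hE
      rw [hSx, Finset.mem_filter] at hE
      have hne1 : C1 ≠ E := fun e => hC1.2 (e ▸ hE.2)
      have hne2 : C2 ≠ E := fun e => hC2.2 (e ▸ hE.2)
      have e1 : C1.filter (fun c => c ∈ E) = C1 ∩ E := Finset.filter_mem_eq_inter
      have e2 : C2.filter (fun d => d ∈ E) = C2 ∩ E := Finset.filter_mem_eq_inter
      rw [e1, e2, hcard2 C1 hC1.1 E hE.1 hne1, hcard2 C2 hC2.1 E hE.1 hne2]
    have hmono : 4 * n ≤ 44 := by
      calc 4 * n = ∑ E ∈ Sx, (C1.filter fun c => c ∈ E).card * (C2.filter fun d => d ∈ E).card := by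
            rw [Finset.sum_congr rfl hlow, Finset.sum_const, smul_eq_mul, mul_comm]
        _ ≤ ∑ E ∈ Dx, (C1.filter fun c => c ∈ E).card * (C2.filter fun d => d ∈ E).card :=
            Finset.sum_le_sum_of_subset hSxDx
        _ = 44 := by rw [key, hR]
    omega
  -- the point-multiplicity functions
  set m := fun y : Fin 22 => (Sx.filter fun B => y ∈ B).card with hm
  set g := fun y : Fin 22 => (Sx'.filter fun B => y ∈ B).card with hg
  -- maximality bound: m y + g y ≤ n
  have hmax' : ∀ y, m y + g y ≤ n := by
    intro y
    have hd : Disjoint (Sx.filter fun B => y ∈ B) (Sx'.filter fun B => y ∈ B) := by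
      rw [Finset.disjoint_left]
      intro B hB1 hB2
      rw [hSx, Finset.filter_filter, Finset.mem_filter] at hB1
      rw [hSx', Finset.filter_filter, Finset.mem_filter] at hB2
      exact hB2.2.1 hB1.2.1
    have hsub : (Sx.filter fun B => y ∈ B) ∪ (Sx'.filter fun B => y ∈ B)
        ⊆ S.filter fun B => y ∈ B := by
      apply Finset.union_subset <;> exact Finset.filter_subset_filter _ (by assumption)
    calc m y + g y = ((Sx.filter fun B => y ∈ B) ∪ (Sx'.filter fun B => y ∈ B)).card := by
          rw [Finset.card_union_of_disjoint hd]
      _ ≤ (S.filter fun B => y ∈ B).card := Finset.card_le_card hsub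
      _ ≤ n := hmax y (Finset.mem_univ y)
  -- first-moment identities
  have hM1 : ∑ y ∈ Y, m y = 5 * n := by
    simp only [hm]
    rw [witt_dc1 Y Sx (fun y B => y ∈ B)]
    rw [Finset.sum_congr rfl (g := fun _ => 5) fun B hB => ?_, Finset.sum_const, smul_eq_mul,
      mul_comm]
    rw [hSx, Finset.mem_filter] at hB
    rw [hYf1, Finset.card_erase_of_mem hB.2, hD.1 B (hS hB.1)]
  have hH1 : ∑ y ∈ Y, g y = 6 * h := by
    simp only [hg]
    rw [witt_dc1 Y Sx' (fun y B => y ∈ B)]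
    rw [Finset.sum_congr rfl (g := fun _ => 6) fun B hB => ?_, Finset.sum_const, smul_eq_mul,
      mul_comm]
    rw [hSx', Finset.mem_filter] at hB
    rw [hYf1, Finset.erase_eq_of_notMem hB.2, hD.1 B (hS hB.1)]
  -- n ≥ 6
  have hn6 : 6 ≤ n := by
    have hle : ∑ y ∈ Y, (m y + g y) ≤ 21 * n := by
      calc ∑ y ∈ Y, (m y + g y) ≤ ∑ _y ∈ Y, n := Finset.sum_le_sum fun y _ => hmax' y
        _ = 21 * n := by rw [Finset.sum_const, smul_eq_mul, hYcard]
    rw [Finset.sum_add_distrib, hM1, hH1] at hle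
    omega
  -- second-moment identities
  have hterm1 : ∀ B ∈ Sx, ∀ B' ∈ Sx, B ≠ B' →
      (Y.filter fun y => y ∈ B ∧ y ∈ B').card = 1 := by
    intro B hB B' hB' hne
    rw [hSx, Finset.mem_filter] at hB hB'
    have h2 : (B ∩ B').card = 2 := hcard2 B hB.1 B' hB'.1 hne
    have hxm : x ∈ B ∩ B' := Finset.mem_inter.2 ⟨hB.2, hB'.2⟩
    rw [hYf2, Finset.card_erase_of_mem hxm, h2]
  have hMM : ∑ y ∈ Y, m y * m y = n * n + 4 * n := by
    simp only [hm]
    rw [witt_dc2 Y Sx Sx (fun y B => y ∈ B) (fun y B => y ∈ B)]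
    have hn1 : 1 ≤ n := by omega
    rw [Finset.sum_congr rfl (g := fun _ => n + 4) fun B hB => ?_, Finset.sum_const, smul_eq_mul]
    · ring
    · rw [← Finset.add_sum_erase _ _ hB]
      have hdiag : (Y.filter fun y => y ∈ B ∧ y ∈ B).card = 5 := by
        have hB' := hB
        rw [hSx, Finset.mem_filter] at hB'
        rw [hYf2, Finset.inter_self, Finset.card_erase_of_mem hB'.2, hD.1 B (hS hB'.1)]
      rw [hdiag, Finset.sum_congr rfl (fun B' hB' => hterm1 B hB B'
          (Finset.mem_of_mem_erase hB') (Ne.symm (Finset.ne_of_mem_erase hB'))),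
        Finset.sum_const, smul_eq_mul, mul_one, Finset.card_erase_of_mem hB]
      beta_reduce
      omega
  have hHH : ∑ y ∈ Y, g y * g y = 2 * h * h + 4 * h := by
    simp only [hg]
    rw [witt_dc2 Y Sx' Sx' (fun y B => y ∈ B) (fun y B => y ∈ B)]
    have hh1 : 1 ≤ h := by omega
    rw [Finset.sum_congr rfl (g := fun _ => 2 * h + 4) fun C hC => ?_, Finset.sum_const,
      smul_eq_mul]
    · ring
    · rw [← Finset.add_sum_erase _ _ hC]
      have hC' := hC
      rw [hSx', Finset.mem_filter] at hC'
      have hdiag : (Y.filter fun y => y ∈ C ∧ y ∈ C).card = 6 := by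
        rw [hYf2, Finset.inter_self, Finset.erase_eq_of_notMem hC'.2, hD.1 C (hS hC'.1)]
      have hoff : ∀ C' ∈ Sx'.erase C, (Y.filter fun y => y ∈ C ∧ y ∈ C').card = 2 := by
        intro C' hC''
        have hC'mem := Finset.mem_of_mem_erase hC''
        have hne : C ≠ C' := Ne.symm (Finset.ne_of_mem_erase hC'')
        have hC'2 := hC'mem
        rw [hSx', Finset.mem_filter] at hC'2
        have h2 : (C ∩ C').card = 2 := hcard2 C hC'.1 C' hC'2.1 hne
        have hxm : x ∉ C ∩ C' := fun hmm => hC'.2 (Finset.mem_inter.1 hmm).1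
        rw [hYf2, Finset.erase_eq_of_notMem hxm, h2]
      rw [hdiag, Finset.sum_congr rfl hoff, Finset.sum_const, smul_eq_mul,
        Finset.card_erase_of_mem hC]
      beta_reduce
      omega
  have hMH : ∑ y ∈ Y, m y * g y = 2 * n * h := by
    simp only [hm, hg]
    rw [witt_dc2 Y Sx Sx' (fun y B => y ∈ B) (fun y B => y ∈ B)]
    rw [Finset.sum_congr rfl (g := fun _ => 2 * h) fun B hB => ?_, Finset.sum_const, smul_eq_mul]
    · ring
    · have hB' := hB
      rw [hSx, Finset.mem_filter] at hB'
      have hoff : ∀ C ∈ Sx', (Y.filter fun y => y ∈ B ∧ y ∈ C).card = 2 := by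
        intro C hC
        rw [hSx', Finset.mem_filter] at hC
        have hne : B ≠ C := fun e => hC.2 (e ▸ hB'.2)
        have h2 : (B ∩ C).card = 2 := hcard2 B hB'.1 C hC.1 hne
        have hxm : x ∉ B ∩ C := fun hmm => hC.2 (Finset.mem_inter.1 hmm).2
        rw [hYf2, Finset.erase_eq_of_notMem hxm, h2]
      rw [Finset.sum_congr rfl hoff, Finset.sum_const, smul_eq_mul, mul_comm]
  -- the square trick
  have hSq : ∀ a b : ℤ, 0 ≤ a ^ 2 * ((n : ℤ) * n + 4 * n) - 2 * a * b * (2 * (n : ℤ) * h)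
      + b ^ 2 * (2 * (h : ℤ) * h + 4 * h) := by
    intro a b
    have h0 : (0 : ℤ) ≤ ∑ y ∈ Y, (a * (m y : ℤ) - b * (g y : ℤ)) ^ 2 :=
      Finset.sum_nonneg fun y _ => sq_nonneg _
    have e1 : ∑ y ∈ Y, ((m y : ℤ) * (m y : ℤ)) = ((n : ℤ) * n + 4 * n) := by
      exact_mod_cast congrArg (Nat.cast : ℕ → ℤ) hMM
    have e2 : ∑ y ∈ Y, ((m y : ℤ) * (g y : ℤ)) = (2 * (n : ℤ) * h) := by
      exact_mod_cast congrArg (Nat.cast : ℕ → ℤ) hMH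
    have e3 : ∑ y ∈ Y, ((g y : ℤ) * (g y : ℤ)) = (2 * (h : ℤ) * h + 4 * h) := by
      exact_mod_cast congrArg (Nat.cast : ℕ → ℤ) hHH
    calc (0:ℤ) ≤ ∑ y ∈ Y, (a * (m y : ℤ) - b * (g y : ℤ)) ^ 2 := h0
      _ = ∑ y ∈ Y, (a ^ 2 * ((m y : ℤ) * (m y : ℤ)) - 2 * a * b * ((m y : ℤ) * (g y : ℤ))
            + b ^ 2 * ((g y : ℤ) * (g y : ℤ))) := Finset.sum_congr rfl fun y _ => by ring
      _ = a ^ 2 * (∑ y ∈ Y, ((m y : ℤ) * (m y : ℤ)))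
            - 2 * a * b * (∑ y ∈ Y, ((m y : ℤ) * (g y : ℤ)))
            + b ^ 2 * (∑ y ∈ Y, ((g y : ℤ) * (g y : ℤ))) := by
          rw [Finset.sum_add_distrib, Finset.sum_sub_distrib, Finset.mul_sum, Finset.mul_sum,
            Finset.mul_sum]
      _ = _ := by rw [e1, e2, e3]
  -- finish by case analysis
  clear_value n h
  clear hn hh hm hg hM1 hH1 hMM hHH hMH hmax' hterm1
  rcases hcard with hc | hc
  · rw [hc] at hnh
    interval_cases n
    · obtain rfl : h = 15 := by omega
      have := hSq 3 1; norm_num at this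
    · obtain rfl : h = 14 := by omega
      have := hSq 3 1; norm_num at this
    · obtain rfl : h = 13 := by omega
      have := hSq 2 1; norm_num at this
    · obtain rfl : h = 12 := by omega
      have := hSq 2 1; norm_num at this
    · obtain rfl : h = 11 := by omega
      have := hSq 2 1; norm_num at this
    · obtain rfl : h = 10 := by omega
      have := hSq 1 1; norm_num at this
  · rw [hc] at hnh
    interval_cases n
    · obtain rfl : h = 16 := by omega
      have := hSq 3 1; norm_num at this
    · obtain rfl : h = 15 := by omega
      have := hSq 3 1; norm_num at this
    · obtain rfl : h = 14 := by omega
      have := hSq 2 1; norm_num at this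
    · obtain rfl : h = 13 := by omega
      have := hSq 2 1; norm_num at this
    · obtain rfl : h = 12 := by omega
      have := hSq 2 1; norm_num at this
    · obtain rfl : h = 11 := by omega
      have := hSq 1 1; norm_num at this

end WittAux

open Finset in
/-- In the Witt graph on the 77 blocks of the 3-(22,6,1) design (blocks adjacent
iff disjoint), the maximum size of an independent set is 21, and every
independent set of size 21 consists of the blocks through some point. -/
theorem witt_graph_max_independent_sets
    (D : Finset (Finset (Fin 22))) (hD : IsWittDesign D) :
    (∀ S ⊆ D, (∀ β ∈ S, ∀ γ ∈ S, β ≠ γ → ¬ Disjoint β γ) → S.card ≤ 21) ∧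
    (∀ p : Fin 22, (D.filter fun β => p ∈ β) ⊆ D ∧
      (∀ β ∈ D.filter fun β => p ∈ β, ∀ γ ∈ D.filter fun β => p ∈ β,
        β ≠ γ → ¬ Disjoint β γ) ∧
      (D.filter fun β => p ∈ β).card = 21) ∧
    (∀ S ⊆ D, (∀ β ∈ S, ∀ γ ∈ S, β ≠ γ → ¬ Disjoint β γ) → S.card = 21 →
      ∃ p : Fin 22, S = D.filter fun β => p ∈ β) := by

  refine ⟨?_, ?_, ?_⟩
  · -- part 1 : independence number at most 21
    intro S hS hint
    by_contra hgt
    push_neg at hgt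
    obtain ⟨T, hTS, hT22⟩ := Finset.exists_subset_card_eq (show 22 ≤ S.card by omega)
    have hintT : ∀ β ∈ T, ∀ γ ∈ T, β ≠ γ → ¬ Disjoint β γ :=
      fun β hβ γ hγ hne => hint β (hTS hβ) γ (hTS hγ) hne
    have hnp : ∀ p : Fin 22, ∃ B ∈ T, p ∉ B := by
      intro p
      by_contra hcon
      push_neg at hcon
      have hsub : T ⊆ D.filter fun β => p ∈ β := fun B hB =>
        Finset.mem_filter.2 ⟨hS (hTS hB), hcon B hB⟩
      have := Finset.card_le_card hsub
      rw [hT22, witt_point_count hD p] at this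
      omega
    exact witt_core hD (hTS.trans hS) hintT (Or.inr hT22) hnp
  · -- part 2 : pencils are independent sets of size 21
    intro p
    refine ⟨Finset.filter_subset _ _, ?_, witt_point_count hD p⟩
    intro β hβ γ hγ _
    rw [Finset.mem_filter] at hβ hγ
    exact Finset.not_disjoint_iff.2 ⟨p, hβ.2, hγ.2⟩
  · -- part 3 : independent sets of size 21 are pencils
    intro S hS hint h21
    by_cases hcp : ∃ p : Fin 22, ∀ B ∈ S, p ∈ B
    · obtain ⟨p, hp⟩ := hcp
      refine ⟨p, ?_⟩
      have hsub : S ⊆ D.filter fun β => p ∈ β := fun B hB =>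
        Finset.mem_filter.2 ⟨hS hB, hp B hB⟩
      apply Finset.eq_of_subset_of_card_le hsub
      rw [witt_point_count hD p, h21]
    · push_neg at hcp
      exact absurd (witt_core hD hS hint (Or.inl h21) hcp) (fun h => h)
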